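/- For every pair of distinct vertices u, v of G^r that are not adjacent in G^r, the graph obtained from G^r by adding the single edge {u, v} is not chordal. Consequently, since G^r itself is not chordal, every chordal graph on the same six vertices containing G^r as a subgraph has at least two more edges than G^r, so H^r (which adds exactly two edges) is a minimal chordal extension of G^r. -/

import Mathlib

/-- Vertices of the LMBM3 real pattern: a bus in `{1,2,3}` (encoded as `Fin 3`,
with bus `1 ↦ 0`, `2 ↦ 1`, `3 ↦ 2`) together with a real/imaginary tag
(`Re ↦ 0`, `Im ↦ 1`). -/
abbrev LMBM3.V := Fin 3 × Fin 2

/-- The graph `G^r`: the complete tripartite graph `K_{2,2,2}` on the six vertices,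
two vertices being adjacent iff they have distinct bus indices. -/
def LMBM3.Gr : SimpleGraph LMBM3.V where
  Adj u v := u.1 ≠ v.1
  symm := ⟨fun _ _ h => h.symm⟩
  loopless := ⟨fun _ h => h rfl⟩

/-- The graph `H^r`: `G^r` together with the two additional edges
`{2_Re, 2_Im}` and `{3_Re, 3_Im}`. -/
def LMBM3.Hr : SimpleGraph LMBM3.V :=
  LMBM3.Gr ⊔ SimpleGraph.fromEdgeSet
    {s(((1 : Fin 3), (0 : Fin 2)), ((1 : Fin 3), (1 : Fin 2))),
     s(((2 : Fin 3), (0 : Fin 2)), ((2 : Fin 3), (1 : Fin 2)))}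

/-- A graph is chordal iff it has no induced cycle of length at least `4`,
i.e. no graph embedding of a cycle graph `C_n` with `n ≥ 4`. -/
def SimpleGraph.IsChordal {α : Type*} (G : SimpleGraph α) : Prop :=
  ∀ n : ℕ, 4 ≤ n → IsEmpty (SimpleGraph.cycleGraph n ↪g G)

section Aux
open LMBM3

def c4_embed (G' : SimpleGraph V) (j k : Fin 3) (hjk : j ≠ k)
    (hle : Gr ≤ G') (hj : ¬G'.Adj (j,0) (j,1)) (hk : ¬G'.Adj (k,0) (k,1)) :
    SimpleGraph.cycleGraph 4 ↪g G' := by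
  have hadj : ∀ (a b : Fin 3) (x y : Fin 2), a ≠ b → G'.Adj (a,x) (b,y) := by
    intro a b x y h
    exact hle h
  have hj' : ¬G'.Adj (j,1) (j,0) := fun h => hj h.symm
  have hk' : ¬G'.Adj (k,1) (k,0) := fun h => hk h.symm
  refine ⟨⟨![(j,0),(k,0),(j,1),(k,1)], ?_⟩, ?_⟩
  · intro a b hab
    fin_cases a <;> fin_cases b <;> simp_all [Prod.ext_iff]
  · intro a b
    change G'.Adj (![(j,0),(k,0),(j,1),(k,1)] a) (![(j,0),(k,0),(j,1),(k,1)] b) ↔ _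
    fin_cases a <;> fin_cases b <;>
      simp_all [SimpleGraph.cycleGraph_adj, hadj, hjk, hjk.symm, G'.irrefl] <;> decide


lemma not_chordal_of_c4 {G' : SimpleGraph V} (f : SimpleGraph.cycleGraph 4 ↪g G') :
    ¬ G'.IsChordal := fun h => (h 4 le_rfl).false f

lemma sup_single_adj (u v : V) (x y : V) :
    (Gr ⊔ SimpleGraph.fromEdgeSet {s(u, v)}).Adj x y ↔
      (x.1 ≠ y.1 ∨ (s(x,y) = s(u,v) ∧ x ≠ y)) := by
  simp [SimpleGraph.fromEdgeSet_adj, Gr]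

lemma part1 : ∀ u v : V, u ≠ v → ¬ Gr.Adj u v →
    ¬ (Gr ⊔ SimpleGraph.fromEdgeSet {s(u, v)}).IsChordal := by
  intro u v huv hna
  obtain ⟨i, a⟩ := u
  obtain ⟨i', b⟩ := v
  have hii : i = i' := by simpa [Gr] using hna
  subst hii
  set G' := Gr ⊔ SimpleGraph.fromEdgeSet {s((i,a), (i,b))} with hG'
  have hle : Gr ≤ G' := le_sup_left
  have key : ∀ j : Fin 3, j ≠ i → ¬G'.Adj (j,0) (j,1) := by
    intro j hj hadj
    rw [hG', sup_single_adj] at hadj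
    rcases hadj with h | ⟨h, _⟩
    · exact h rfl
    · rw [Sym2.eq_iff] at h
      rcases h with ⟨h, _⟩ | ⟨h, _⟩ <;> exact hj (congrArg Prod.fst h)
  intro hch
  have hj : (![1,0,0] : Fin 3 → Fin 3) i ≠ i := by fin_cases i <;> decide
  have hk : (![2,2,1] : Fin 3 → Fin 3) i ≠ i := by fin_cases i <;> decide
  have hjk : (![1,0,0] : Fin 3 → Fin 3) i ≠ (![2,2,1] : Fin 3 → Fin 3) i := by
    fin_cases i <;> decide
  exact (hch 4 le_rfl).false (c4_embed G' _ _ hjk hle (key _ hj) (key _ hk))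

lemma part2 : ¬ Gr.IsChordal := by
  apply not_chordal_of_c4
  exact c4_embed Gr 0 1 (by decide) le_rfl (by simp [Gr]) (by simp [Gr])


lemma hr_adj_iff (x y : V) : Hr.Adj x y ↔
    (x.1 ≠ y.1 ∨ ((s(x,y) = s(((1:Fin 3),(0:Fin 2)),((1:Fin 3),(1:Fin 2))) ∨
      s(x,y) = s(((2:Fin 3),(0:Fin 2)),((2:Fin 3),(1:Fin 2)))) ∧ x ≠ y)) := by
  simp [Hr, Gr, SimpleGraph.fromEdgeSet_adj, Set.mem_insert_iff, Set.mem_singleton_iff]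

lemma hr_nonadj (x y : V) (hxy : x ≠ y) (h : ¬ Hr.Adj x y) :
    s(x,y) = s(((0:Fin 3),(0:Fin 2)),((0:Fin 3),(1:Fin 2))) := by
  rw [hr_adj_iff] at h
  revert h hxy
  revert x y
  decide

lemma part4 : Hr.IsChordal := by
  intro n hn
  constructor
  intro f
  have h4 : (4:ℕ) ≤ n := hn
  have z0 : Fin n := ⟨0, by omega⟩
  let v : Fin 4 → Fin n := fun i => ⟨i.val, by omega⟩
  have mod_ne : ∀ x y : ℕ, x < 4 → y < 4 → (x + 2 = y ∨ y + 2 = x) →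
      (n - y + x) % n ≠ 1 := by
    intro x y hx hy hxy
    rcases le_or_gt y x with h | h
    · have e : n - y + x = (x - y) + n := by omega
      rw [e, Nat.add_mod_right, Nat.mod_eq_of_lt (by omega)]
      omega
    · have e : n - y + x = n - (y - x) := by omega
      rw [e, Nat.mod_eq_of_lt (by omega)]
      omega
  have hnadj : ∀ a b : Fin 4, (a.val + 2 = b.val ∨ b.val + 2 = a.val) →
      ¬ (SimpleGraph.cycleGraph n).Adj (v a) (v b) := by
    intro a b hab hadj
    rw [SimpleGraph.cycleGraph_adj'] at hadj
    simp only [v, Fin.sub_def] at hadj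
    rcases hadj with h | h
    · exact mod_ne a.val b.val a.isLt b.isLt hab h
    · exact mod_ne b.val a.val b.isLt a.isLt (Or.symm hab) h
  have h02 : ¬ (SimpleGraph.cycleGraph n).Adj (v 0) (v 2) := hnadj 0 2 (by decide)
  have h13 : ¬ (SimpleGraph.cycleGraph n).Adj (v 1) (v 3) := hnadj 1 3 (by decide)
  have hvne : ∀ a b : Fin 4, a ≠ b → v a ≠ v b := by
    intro a b hab h
    apply hab
    have := congrArg Fin.val h
    simp only [v] at this
    exact Fin.ext this
  have e02 := hr_nonadj (f (v 0)) (f (v 2))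
    (fun h => hvne 0 2 (by decide) (f.injective h)) (fun h => h02 (f.map_rel_iff.mp h))
  have e13 := hr_nonadj (f (v 1)) (f (v 3))
    (fun h => hvne 1 3 (by decide) (f.injective h)) (fun h => h13 (f.map_rel_iff.mp h))
  rw [← e13, Sym2.eq_iff] at e02
  rcases e02 with ⟨h, _⟩ | ⟨h, _⟩
  · exact hvne 0 1 (by decide) (f.injective h)
  · exact hvne 0 3 (by decide) (f.injective h)

lemma part6 : Hr.edgeSet.ncard = Gr.edgeSet.ncard + 2 := by
  have e1 : Sym2 V := s(((1:Fin 3),(0:Fin 2)),((1:Fin 3),(1:Fin 2)))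
  have hset : Hr.edgeSet = insert s(((1:Fin 3),(0:Fin 2)),((1:Fin 3),(1:Fin 2)))
      (insert s(((2:Fin 3),(0:Fin 2)),((2:Fin 3),(1:Fin 2))) Gr.edgeSet) := by
    rw [Hr, SimpleGraph.edgeSet_sup, SimpleGraph.edgeSet_fromEdgeSet]
    ext e
    simp only [Set.mem_union, Set.mem_diff, Set.mem_insert_iff, Set.mem_singleton_iff,
      Set.mem_setOf_eq]
    constructor
    · rintro (h | ⟨(h | h), _⟩)
      · right; right; exact h
      · left; exact h
      · right; left; exact h
    · rintro (h | h | h)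
      · exact Or.inr ⟨Or.inl h, by subst h; decide⟩
      · exact Or.inr ⟨Or.inr h, by subst h; decide⟩
      · exact Or.inl h
  have h2 : s(((2:Fin 3),(0:Fin 2)),((2:Fin 3),(1:Fin 2))) ∉ Gr.edgeSet := by
    simp [Gr, SimpleGraph.mem_edgeSet]
  have h1 : s(((1:Fin 3),(0:Fin 2)),((1:Fin 3),(1:Fin 2))) ∉
      insert s(((2:Fin 3),(0:Fin 2)),((2:Fin 3),(1:Fin 2))) Gr.edgeSet := by
    simp only [Set.mem_insert_iff, SimpleGraph.mem_edgeSet]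
    push_neg
    exact ⟨by decide, by simp [Gr]⟩
  rw [hset, Set.ncard_insert_of_notMem h1 ((Set.toFinite _).insert _),
    Set.ncard_insert_of_notMem h2 (Set.toFinite _)]

lemma part3 : ∀ H : SimpleGraph V, H.IsChordal → Gr ≤ H →
    Gr.edgeSet.ncard + 2 ≤ H.edgeSet.ncard := by
  intro H hch hle
  have hsub : Gr.edgeSet ⊆ H.edgeSet := SimpleGraph.edgeSet_mono hle
  have hne : Gr.edgeSet ≠ H.edgeSet := by
    intro h
    exact part2 ((SimpleGraph.edgeSet_inj.mp h) ▸ hch)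
  obtain ⟨e, heH, heG⟩ : ∃ e, e ∈ H.edgeSet ∧ e ∉ Gr.edgeSet := by
    by_contra h
    push_neg at h
    exact hne (Set.Subset.antisymm hsub h)
  by_cases hex : ∃ e', e' ∈ H.edgeSet ∧ e' ∉ Gr.edgeSet ∧ e' ≠ e
  · obtain ⟨e', he'H, he'G, he'e⟩ := hex
    have hsub2 : insert e (insert e' Gr.edgeSet) ⊆ H.edgeSet := by
      intro x hx
      rcases hx with h | h | h
      · exact h ▸ heH
      · exact h ▸ he'H
      · exact hsub h
    calc Gr.edgeSet.ncard + 2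
        = (insert e (insert e' Gr.edgeSet)).ncard := by
          rw [Set.ncard_insert_of_notMem (by simp [heG, he'e.symm]) ((Set.toFinite _).insert _),
            Set.ncard_insert_of_notMem he'G (Set.toFinite _)]
      _ ≤ H.edgeSet.ncard := Set.ncard_le_ncard hsub2 (Set.toFinite _)
  · push_neg at hex
    exfalso
    have hHeq : H.edgeSet = insert e Gr.edgeSet := by
      apply Set.Subset.antisymm
      · intro x hx
        by_cases hxG : x ∈ Gr.edgeSet
        · exact Set.mem_insert_of_mem _ hxG
        · exact (hex x hx hxG) ▸ Set.mem_insert _ _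
      · intro x hx
        rcases hx with h | h
        · exact h ▸ heH
        · exact hsub h
    have hnd : ¬ e.IsDiag := SimpleGraph.not_isDiag_of_mem_edgeSet H heH
    induction e using Sym2.ind with
    | _ u v =>
      have huv : u ≠ v := by simpa using hnd
      have hnadj : ¬ Gr.Adj u v := fun h => heG ((SimpleGraph.mem_edgeSet Gr).mpr h)
      apply part1 u v huv hnadj
      have : H = Gr ⊔ SimpleGraph.fromEdgeSet {s(u, v)} := by
        apply SimpleGraph.edgeSet_inj.mp
        rw [SimpleGraph.edgeSet_sup, SimpleGraph.edgeSet_fromEdgeSet, hHeq]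
        ext x
        simp only [Set.mem_insert_iff, Set.mem_union, Set.mem_diff, Set.mem_singleton_iff,
          Set.mem_setOf_eq]
        constructor
        · rintro (h | h)
          · exact Or.inr ⟨h, h ▸ hnd⟩
          · exact Or.inl h
        · rintro (h | ⟨h, _⟩)
          · exact Or.inr h
          · exact Or.inl h
      exact this ▸ hch

end Aux

open LMBM3 in
/-- Adding any single missing edge to `G^r` never yields a chordal graph; since `G^r`
is itself not chordal, every chordal graph on the six vertices containing `G^r` has at
least two more edges than `G^r`, and `H^r` — which adds exactly two edges — is a
minimal chordal extension of `G^r`. -/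
theorem Gr_minimal_chordal_extension :
    (∀ u v : V, u ≠ v → ¬ Gr.Adj u v →
      ¬ (Gr ⊔ SimpleGraph.fromEdgeSet {s(u, v)}).IsChordal) ∧
    ¬ Gr.IsChordal ∧
    (∀ H : SimpleGraph V, H.IsChordal → Gr ≤ H →
      Gr.edgeSet.ncard + 2 ≤ H.edgeSet.ncard) ∧
    Hr.IsChordal ∧ Gr ≤ Hr ∧ Hr.edgeSet.ncard = Gr.edgeSet.ncard + 2 :=
  ⟨part1, part2, part3, part4, le_sup_left, part6⟩
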